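/- Let v ∈ Δ_{p+1,q+1} \ {0} with e_−·v = 0. Then the kernel of v under Clifford multiplication by vectors of ℝ^{p+1,q+1} is {X ∈ ℝ^{p+1,q+1} : X·v = 0} = ℝe_− ⊕ {y ∈ span(e₁,…,e_n) : y·v = 0}; in particular its dimension exceeds by exactly one the dimension of the kernel of v under Clifford multiplication by vectors of ℝ^{p,q} = span(e₁,…,e_n). -/

import Mathlib

open Complex Matrix

namespace Paper

noncomputable section

/-- The 2×2 generator matrices of Remark 2.1. -/
def matE : Matrix (Fin 2) (Fin 2) ℂ := 1
def matT : Matrix (Fin 2) (Fin 2) ℂ := !![-1, 0; 0, 1]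
def matG1 : Matrix (Fin 2) (Fin 2) ℂ := !![0, Complex.I; Complex.I, 0]
def matG2 : Matrix (Fin 2) (Fin 2) ℂ := !![0, -1; 1, 0]

/-- Iterated Kronecker product of 2×2 matrices, realised on the index type `Fin m → Fin 2`
(the slot `ν` corresponds to the `(ν+1)`-st label of the basis spinors `u(ε₁,…,ε_m)`,
i.e. the Kronecker factors are taken from right to left). -/
def tprod {m : ℕ} (M : Fin m → Matrix (Fin 2) (Fin 2) ℂ) :
    Matrix (Fin m → Fin 2) (Fin m → Fin 2) ℂ :=
  Matrix.of fun a b => ∏ ν, M ν (a ν) (b ν)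

/-- `τ_j = 1` if `ε_j = 1` and `τ_j = i` if `ε_j = -1`. -/
def tau {n : ℕ} (ε : Fin n → ℝ) (j : Fin n) : ℂ := if ε j = 1 then 1 else Complex.I

/-- The matrices `Φ_{p,q}(e_i)` of the explicit Clifford representation of Remark 2.1
(0-based index `i`; the paper's `e_{2j-1}` resp. `e_{2j}` correspond to `i = 2j-2` resp.
`i = 2j-1`, acting by `g₁` resp. `g₂` in slot `j-1`, by `T` in the lower slots and by `E`
in the higher slots).  For odd `n` the last matrix is the first component
`pr₁ ∘ Φ̃ (e_n) = τ_n · (i T ⊗ ⋯ ⊗ T)`. -/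
def Phi {n : ℕ} (ε : Fin n → ℝ) (i : Fin n) :
    Matrix (Fin (n / 2) → Fin 2) (Fin (n / 2) → Fin 2) ℂ :=
  tau ε i •
    if i.val < 2 * (n / 2) then
      tprod fun ν : Fin (n / 2) =>
        if ν.val < i.val / 2 then matT
        else if ν.val = i.val / 2 then (if i.val % 2 = 0 then matG1 else matG2)
        else matE
    else Complex.I • tprod fun _ : Fin (n / 2) => matT

/-- The spinor module `Δ_{p,q} = ℂ^{2^{⌊n/2⌋}}`. -/
abbrev Spinor (n : ℕ) := (Fin (n / 2) → Fin 2) → ℂ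

/-- Clifford multiplication by a real vector, as a matrix. -/
def cliffR {n : ℕ} (ε : Fin n → ℝ) (x : Fin n → ℝ) :
    Matrix (Fin (n / 2) → Fin 2) (Fin (n / 2) → Fin 2) ℂ :=
  ∑ i, (x i : ℂ) • Phi ε i

/-- Clifford multiplication by a complex vector (complex-bilinear extension). -/
def cliffC {n : ℕ} (ε : Fin n → ℝ) (x : Fin n → ℂ) :
    Matrix (Fin (n / 2) → Fin 2) (Fin (n / 2) → Fin 2) ℂ :=
  ∑ i, x i • Phi ε i

/-- The scalar product `⟨x,y⟩_{p,q} = ∑ ε_i x_i y_i` on `ℝⁿ`. -/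
def ipR {n : ℕ} (ε : Fin n → ℝ) (x y : Fin n → ℝ) : ℝ := ∑ i, ε i * x i * y i

/-- Its complex-bilinear extension to `ℂⁿ`. -/
def ipC {n : ℕ} (ε : Fin n → ℝ) (x y : Fin n → ℂ) : ℂ := ∑ i, (ε i : ℂ) * x i * y i

/-- The standard Hermitian scalar product on the spinor module. -/
def stdInner {n : ℕ} (u v : Spinor n) : ℂ := ∑ b, (starRingEnd ℂ) (u b) * v b

/-- Clifford multiplication by the product `e_{i₁} ⋯ e_{i_k}` over a set of indices
`s = {i₁ < … < i_k}`, taken in increasing order. -/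
def cliffSet {n : ℕ} (ε : Fin n → ℝ) (s : Finset (Fin n)) :
    Matrix (Fin (n / 2) → Fin 2) (Fin (n / 2) → Fin 2) ℂ :=
  ((s.sort (· ≤ ·)).map (Phi ε)).prod

/-- The set of indices with `ε_i = -1`. -/
def negSet {n : ℕ} (ε : Fin n → ℝ) : Finset (Fin n) := Finset.univ.filter fun i => ε i = -1

/-- The indefinite spinor inner product `⟨u,v⟩_Δ = d · (e_{i₁} ⋯ e_{i_p} · u, v)`,
where `i₁ < … < i_p` are the indices with `ε = -1`. -/
def sform {n : ℕ} (ε : Fin n → ℝ) (d : ℂ) (u v : Spinor n) : ℂ :=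
  d * stdInner ((cliffSet ε (negSet ε)).mulVec u) v

/-- The coefficient `d_{k,p} · ε_{i₁} ⋯ ε_{i_k} · ⟨e_{i₁} ⋯ e_{i_k} · χ, χ⟩_Δ` of the
algebraic Dirac form (`dD` is the constant of the spinor inner product, `dk` is `d_{k,p}`). -/
def dCoeff {n : ℕ} (ε : Fin n → ℝ) (dD dk : ℂ) (s : Finset (Fin n)) (χ : Spinor n) : ℂ :=
  dk * (∏ i ∈ s, (ε i : ℂ)) * sform ε dD ((cliffSet ε s).mulVec χ) χ

/-- The covector `X^♭ = ⟨X,·⟩_{p,q}`. -/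
def flat {n : ℕ} (ε : Fin n → ℝ) (X : Fin n → ℝ) : (Fin n → ℝ) →ₗ[ℝ] ℝ :=
  ∑ i, (ε i * X i) • LinearMap.proj i

/-- The wedge product of `k` one-forms, as an alternating `k`-form. -/
def wedge1 {n k : ℕ} (f : Fin k → ((Fin n → ℝ) →ₗ[ℝ] ℝ)) :
    AlternatingMap ℝ (Fin n → ℝ) ℝ (Fin k) :=
  (Matrix.detRowAlternating : AlternatingMap ℝ (Fin k → ℝ) ℝ (Fin k)).compLinearMap
    (LinearMap.pi f)

/-- The algebraic Dirac `k`-form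
`α^k_χ = d_{k,p} ∑_{i₁<⋯<i_k} ε_{i₁}⋯ε_{i_k} ⟨e_{i₁}⋯e_{i_k}·χ, χ⟩_Δ e^♭_{i₁} ∧ ⋯ ∧ e^♭_{i_k}`
(a real form; the coefficients are real by the choice of the constant `dk = d_{k,p}`). -/
def diracForm {n : ℕ} (ε : Fin n → ℝ) (dD dk : ℂ) (k : ℕ) (χ : Spinor n) :
    AlternatingMap ℝ (Fin n → ℝ) ℝ (Fin k) :=
  ∑ s : Finset (Fin n),
    if h : s.card = k then
      (dCoeff ε dD dk s χ).re •
        wedge1 fun j => flat ε (Pi.single (s.orderEmbOfFin h j) 1)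
    else 0

/-- The wedge product of `j` one-forms with a `(p-j)`-form, as an alternating `p`-form. -/
def wedgeMix {n p j : ℕ} (h : j ≤ p) (f : Fin j → ((Fin n → ℝ) →ₗ[ℝ] ℝ))
    (β : AlternatingMap ℝ (Fin n → ℝ) ℝ (Fin (p - j))) :
    AlternatingMap ℝ (Fin n → ℝ) ℝ (Fin p) :=
  AlternatingMap.domDomCongr (finSumFinEquiv.trans (finCongr (by omega)))
    ((TensorProduct.lid ℝ ℝ).toLinearMap.compAlternatingMap ((wedge1 f).domCoprod β))

/-- The basis spinor `u(ε₁,…,ε_m)` (encoded by `a : Fin m → Fin 2`, where `a ν = 0`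
corresponds to the label `ε_{ν+1} = 1` and `a ν = 1` to `ε_{ν+1} = -1`). -/
def uB (n : ℕ) (a : Fin (n / 2) → Fin 2) : Spinor n := fun b => if b = a then 1 else 0

end

end Paper
namespace Paper

/-- The lightlike vector `e₋ = (e_{n+1} - e₀)/√2` in `ℝ^{p+1,q+1} = ℝ^{n+2}`. -/
noncomputable def eMinus (n : ℕ) : Fin (n + 2) → ℝ :=
  (Real.sqrt 2)⁻¹ • (Pi.single (Fin.last (n + 1)) 1 - Pi.single 0 1)

noncomputable section

lemma g1g2 : matG1 * matG2 = -(matG2 * matG1) := by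
  ext i j; fin_cases i <;> fin_cases j <;>
    simp [matG1, matG2, Matrix.mul_apply, Fin.sum_univ_two]
lemma g1T : matG1 * matT = -(matT * matG1) := by
  ext i j; fin_cases i <;> fin_cases j <;>
    simp [matG1, matT, Matrix.mul_apply, Fin.sum_univ_two]
lemma g2T : matG2 * matT = -(matT * matG2) := by
  ext i j; fin_cases i <;> fin_cases j <;>
    simp [matG2, matT, Matrix.mul_apply, Fin.sum_univ_two]
lemma Tsq : matT * matT = 1 := by
  ext i j; fin_cases i <;> fin_cases j <;>
    simp [matT, Matrix.mul_apply, Fin.sum_univ_two, Matrix.one_apply]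
lemma g1sq : matG1 * matG1 = -1 := by
  ext i j; fin_cases i <;> fin_cases j <;>
    simp [matG1, Matrix.mul_apply, Fin.sum_univ_two, Matrix.one_apply, Complex.I_mul_I]
lemma g2sq : matG2 * matG2 = -1 := by
  ext i j; fin_cases i <;> fin_cases j <;>
    simp [matG2, Matrix.mul_apply, Fin.sum_univ_two, Matrix.one_apply]

lemma tprod_mul {m : ℕ} (M N : Fin m → Matrix (Fin 2) (Fin 2) ℂ) :
    tprod M * tprod N = tprod (fun ν => M ν * N ν) := by
  ext a b
  simp only [tprod, Matrix.mul_apply, Matrix.of_apply]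
  rw [Finset.prod_univ_sum]
  simp [Finset.prod_mul_distrib]

lemma tprod_smul_of {m : ℕ} (M N : Fin m → Matrix (Fin 2) (Fin 2) ℂ) (c : Fin m → ℂ)
    (h : ∀ ν, M ν = c ν • N ν) :
    tprod M = (∏ ν, c ν) • tprod N := by
  ext a b
  simp only [tprod, Matrix.of_apply, Matrix.smul_apply, smul_eq_mul]
  calc ∏ ν, M ν (a ν) (b ν) = ∏ ν, c ν * N ν (a ν) (b ν) := by
        refine Finset.prod_congr rfl fun ν _ => by rw [h ν]; rfl
    _ = _ := by rw [Finset.prod_mul_distrib]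

lemma tprod_one {m : ℕ} : tprod (fun _ : Fin m => (1 : Matrix (Fin 2) (Fin 2) ℂ)) = 1 := by
  ext a b
  simp only [tprod, Matrix.of_apply, Matrix.one_apply]
  rw [Finset.prod_boole]
  simp [funext_iff, eq_comm]

/-- `tprod M` and `tprod N` anticommute when the factors anticommute in exactly one slot. -/
lemma tprod_anticomm {m : ℕ} (M N : Fin m → Matrix (Fin 2) (Fin 2) ℂ) (ν₀ : Fin m)
    (h0 : M ν₀ * N ν₀ = -(N ν₀ * M ν₀))
    (h : ∀ ν, ν ≠ ν₀ → M ν * N ν = N ν * M ν) :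
    tprod M * tprod N = -(tprod N * tprod M) := by
  rw [tprod_mul, tprod_mul]
  have := tprod_smul_of (fun ν => M ν * N ν) (fun ν => N ν * M ν)
      (fun ν => if ν = ν₀ then (-1 : ℂ) else 1) ?_
  · rw [this]
    rw [Finset.prod_ite_eq' Finset.univ ν₀ (fun _ => (-1 : ℂ))]
    simp
  · intro ν
    by_cases hν : ν = ν₀
    · subst hν; simp [h0]
    · simp [hν, h ν hν]

/-- `tprod M` squares to `±1` depending on whether one slot squares to `-1`. -/
lemma tprod_sq_neg_one {m : ℕ} (M : Fin m → Matrix (Fin 2) (Fin 2) ℂ) (ν₀ : Fin m)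
    (h0 : M ν₀ * M ν₀ = -1) (h : ∀ ν, ν ≠ ν₀ → M ν * M ν = 1) :
    tprod M * tprod M = -1 := by
  rw [tprod_mul]
  have := tprod_smul_of (fun ν => M ν * M ν) (fun _ => (1 : Matrix (Fin 2) (Fin 2) ℂ))
      (fun ν => if ν = ν₀ then (-1 : ℂ) else 1) ?_
  · rw [this, Finset.prod_ite_eq' Finset.univ ν₀ (fun _ => (-1 : ℂ)), tprod_one]
    simp
  · intro ν
    by_cases hν : ν = ν₀
    · subst hν; simp [h0]
    · simp [hν, h ν hν]

lemma tprod_sq_one {m : ℕ} (M : Fin m → Matrix (Fin 2) (Fin 2) ℂ)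
    (h : ∀ ν, M ν * M ν = 1) : tprod M * tprod M = 1 := by
  rw [tprod_mul]
  have : (fun ν => M ν * M ν) = fun _ : Fin m => (1 : Matrix (Fin 2) (Fin 2) ℂ) :=
    funext fun ν => h ν
  rw [this, tprod_one]

/-- factor matrices of `Phi` (for a normal index, and constant `matT` for the special one). -/
def pF {n : ℕ} (i : Fin n) : Fin (n / 2) → Matrix (Fin 2) (Fin 2) ℂ := fun ν =>
  if i.val < 2 * (n / 2) then
    (if ν.val < i.val / 2 then matT
     else if ν.val = i.val / 2 then (if i.val % 2 = 0 then matG1 else matG2)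
     else matE)
  else matT

def pC {n : ℕ} (ε : Fin n → ℝ) (i : Fin n) : ℂ :=
  if i.val < 2 * (n / 2) then tau ε i else tau ε i * Complex.I

lemma Phi_eq {n : ℕ} (ε : Fin n → ℝ) (i : Fin n) :
    Phi ε i = pC ε i • tprod (pF i) := by
  by_cases h : i.val < 2 * (n / 2)
  · have hF : pF i = fun ν : Fin (n / 2) =>
        (if ν.val < i.val / 2 then matT
         else if ν.val = i.val / 2 then (if i.val % 2 = 0 then matG1 else matG2)
         else matE) := by
      funext ν; simp only [pF, if_pos h]
    rw [Phi, pC, if_pos h, if_pos h, hF]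
  · have hF : pF i = fun _ : Fin (n / 2) => matT := by
      funext ν; simp only [pF, if_neg h]
    rw [Phi, pC, if_neg h, if_neg h, smul_smul, hF]

lemma pC_sq {n : ℕ} (ε : Fin n → ℝ) (hε : ∀ i, ε i = 1 ∨ ε i = -1) (i : Fin n)
    (h : i.val < 2 * (n / 2)) : pC ε i * pC ε i = (if ε i = 1 then 1 else -1 : ℂ) := by
  rcases hε i with h1 | h1 <;> simp [pC, h, tau, h1, Complex.I_mul_I] <;> norm_num [h1]

lemma pC_sq' {n : ℕ} (ε : Fin n → ℝ) (hε : ∀ i, ε i = 1 ∨ ε i = -1) (i : Fin n)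
    (h : ¬ i.val < 2 * (n / 2)) : pC ε i * pC ε i = (if ε i = 1 then -1 else 1 : ℂ) := by
  rcases hε i with h1 | h1 <;> simp [pC, h, tau, h1] <;> norm_num [h1] <;>
    ring_nf <;> simp [Complex.I_sq]

/-- The square of `Phi ε i` is `-ε i`. -/
lemma Phi_sq {n : ℕ} (ε : Fin n → ℝ) (hε : ∀ i, ε i = 1 ∨ ε i = -1) (i : Fin n) :
    Phi ε i * Phi ε i = ((-(ε i) : ℝ) : ℂ) • 1 := by
  rw [Phi_eq, smul_mul_smul_comm]
  by_cases h : i.val < 2 * (n / 2)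
  · have hslot : i.val / 2 < n / 2 := by omega
    have hsq : tprod (pF i) * tprod (pF i) = -1 := by
      apply tprod_sq_neg_one _ ⟨i.val / 2, hslot⟩
      · simp only [pF, if_pos h]
        by_cases hm : i.val % 2 = 0
        · simp [hm, g1sq]
        · simp [hm, g2sq]
      · intro ν hν
        have hν' : ν.val ≠ i.val / 2 := by
          intro hc; apply hν; exact Fin.ext hc
        simp only [pF, if_pos h]
        by_cases hlt : ν.val < i.val / 2
        · simp [hlt, Tsq]
        · simp only [if_neg hlt, if_neg hν']
          simp [matE]
    rw [hsq, pC_sq ε hε i h]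
    rcases hε i with h1 | h1 <;> simp [h1] <;> norm_num
  · have hsq : tprod (pF i) * tprod (pF i) = 1 := by
      apply tprod_sq_one
      intro ν
      simp [pF, if_neg h, Tsq]
    rw [hsq, pC_sq' ε hε i h]
    rcases hε i with h1 | h1 <;> simp [h1] <;> norm_num

lemma smul_anticomm_mat {k : Type*} [Fintype k] [DecidableEq k]
    {A B : Matrix k k ℂ} (c d : ℂ) (h : A * B = -(B * A)) :
    (c • A) * (d • B) = -((d • B) * (c • A)) := by
  rw [smul_mul_smul_comm, smul_mul_smul_comm, h, mul_comm c d, smul_neg]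

/-- key anticommutation for `i < j`. -/
lemma Phi_anticomm_lt {n : ℕ} (ε : Fin n → ℝ) {i j : Fin n} (hij : i.val < j.val) :
    Phi ε i * Phi ε j = -(Phi ε j * Phi ε i) := by
  rw [Phi_eq, Phi_eq]
  apply smul_anticomm_mat
  have hi : i.val < 2 * (n / 2) := by
    have := j.isLt
    omega
  have hslot : i.val / 2 < n / 2 := by omega
  apply tprod_anticomm _ _ ⟨i.val / 2, hslot⟩
  · -- the slot i/2
    by_cases hj : j.val < 2 * (n / 2)
    · by_cases heq : i.val / 2 = j.val / 2
      · -- adjacent pair: i even, j = i + 1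
        have hm : i.val % 2 = 0 ∧ j.val % 2 = 1 := by omega
        simp only [pF, if_pos hi, if_pos hj]
        simp [← heq, hm.1, hm.2, g1g2]
      · have hlt : i.val / 2 < j.val / 2 := by omega
        simp only [pF, if_pos hi, if_pos hj]
        by_cases hm : i.val % 2 = 0
        · simp [hlt, hm, g1T]
        · simp [hlt, hm, g2T]
    · simp only [pF, if_pos hi, if_neg hj]
      by_cases hm : i.val % 2 = 0
      · simp [hm, g1T]
      · simp [hm, g2T]
  · -- the other slots commute
    intro ν hν
    have hν' : ν.val ≠ i.val / 2 := fun hc => hν (Fin.ext hc)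
    by_cases hlt : ν.val < i.val / 2
    · -- both factors are matT
      have h1 : pF i ν = matT := by simp [pF, if_pos hi, hlt]
      have h2 : pF j ν = matT := by
        by_cases hj : j.val < 2 * (n / 2)
        · have : ν.val < j.val / 2 := by omega
          simp [pF, if_pos hj, this]
        · simp [pF, if_neg hj]
      rw [h1, h2]
    · -- pF i ν = matE = 1
      have h1 : pF i ν = 1 := by
        simp only [pF, if_pos hi, if_neg hlt, if_neg hν']
        rfl
      rw [h1, one_mul, mul_one]

lemma Phi_anticomm {n : ℕ} (ε : Fin n → ℝ) {i j : Fin n} (hij : i ≠ j) :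
    Phi ε i * Phi ε j = -(Phi ε j * Phi ε i) := by
  rcases lt_or_gt_of_ne (fun h : i.val = j.val => hij (Fin.ext h)) with h | h
  · exact Phi_anticomm_lt ε h
  · rw [Phi_anticomm_lt ε h, neg_neg]

lemma cliffR_mul_expand {n : ℕ} (ε : Fin n → ℝ) (x y : Fin n → ℝ) :
    cliffR ε x * cliffR ε y =
      ∑ i, ∑ j, ((x i : ℂ) * (y j : ℂ)) • (Phi ε i * Phi ε j) := by
  rw [cliffR, cliffR, Finset.sum_mul]
  refine Finset.sum_congr rfl fun i _ => ?_
  rw [Finset.mul_sum]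
  refine Finset.sum_congr rfl fun j _ => ?_
  rw [smul_mul_smul_comm]

/-- The Clifford relation for `cliffR`. -/
lemma cliffR_rel {n : ℕ} (ε : Fin n → ℝ) (hε : ∀ i, ε i = 1 ∨ ε i = -1) (x y : Fin n → ℝ) :
    cliffR ε x * cliffR ε y + cliffR ε y * cliffR ε x
      = ((-2 * ipR ε x y : ℝ) : ℂ) • 1 := by
  rw [cliffR_mul_expand, cliffR_mul_expand]
  rw [Finset.sum_comm (f := fun i j => ((y i : ℂ) * (x j : ℂ)) • (Phi ε i * Phi ε j))]
  rw [← Finset.sum_add_distrib]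
  have step : ∀ i : Fin n,
      (∑ j, ((x i : ℂ) * (y j : ℂ)) • (Phi ε i * Phi ε j))
        + ∑ j, ((y j : ℂ) * (x i : ℂ)) • (Phi ε j * Phi ε i)
      = ((-2 * (ε i * x i * y i) : ℝ) : ℂ) • 1 := by
    intro i
    rw [← Finset.sum_add_distrib]
    have term : ∀ j : Fin n,
        ((x i : ℂ) * (y j : ℂ)) • (Phi ε i * Phi ε j)
          + ((y j : ℂ) * (x i : ℂ)) • (Phi ε j * Phi ε i)
        = if j = i then ((-2 * (ε i * x i * y i) : ℝ) : ℂ) • 1 else 0 := by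
      intro j
      by_cases hj : j = i
      · subst hj
        rw [if_pos rfl, Phi_sq ε hε, mul_comm ((y j : ℂ)) ((x j : ℂ)), ← add_smul,
          smul_smul]
        congr 1
        push_cast
        ring
      · rw [if_neg hj, Phi_anticomm ε (Ne.symm hj), smul_neg,
          mul_comm ((y j : ℂ)) ((x i : ℂ)), neg_add_cancel]
    rw [Finset.sum_congr rfl fun j _ => term j, Finset.sum_ite_eq' Finset.univ i
      (fun _ => ((-2 * (ε i * x i * y i) : ℝ) : ℂ) • (1 : Matrix (Fin (n / 2) → Fin 2) (Fin (n / 2) → Fin 2) ℂ))]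
    simp
  rw [Finset.sum_congr rfl fun i _ => step i, ← Finset.sum_smul]
  congr 1
  rw [ipR]
  push_cast
  rw [Finset.mul_sum]

lemma cliffR_add {n : ℕ} (ε : Fin n → ℝ) (x y : Fin n → ℝ) :
    cliffR ε (x + y) = cliffR ε x + cliffR ε y := by
  simp [cliffR, add_smul, Finset.sum_add_distrib]

lemma cliffR_smul {n : ℕ} (ε : Fin n → ℝ) (a : ℝ) (x : Fin n → ℝ) :
    cliffR ε (a • x) = (a : ℂ) • cliffR ε x := by
  rw [cliffR, cliffR, Finset.smul_sum]
  refine Finset.sum_congr rfl fun i _ => ?_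
  rw [smul_smul, Pi.smul_apply, smul_eq_mul]
  push_cast
  rfl

lemma rsmul_eq {I : Type*} (a : ℝ) (w : I → ℂ) : a • w = (a : ℂ) • w := by
  funext i; simp [Complex.real_smul]

/-- Clifford multiplication on a fixed spinor, as a real-linear map. -/
def cliffMulVec {n : ℕ} (ε : Fin n → ℝ) (v : Spinor n) :
    (Fin n → ℝ) →ₗ[ℝ] ((Fin (n / 2) → Fin 2) → ℂ) where
  toFun x := (cliffR ε x).mulVec v
  map_add' x y := by
    show (cliffR ε (x + y)).mulVec v = _
    rw [cliffR_add, Matrix.add_mulVec]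
  map_smul' a x := by
    show (cliffR ε (a • x)).mulVec v = _
    rw [cliffR_smul, Matrix.smul_mulVec, RingHom.id_apply, rsmul_eq]

/-- If `x` annihilates `v`, then applying `x·` after `y·` acts by the scalar `-2⟨x,y⟩`. -/
lemma cliff_double {n : ℕ} (ε : Fin n → ℝ) (hε : ∀ i, ε i = 1 ∨ ε i = -1)
    (x y : Fin n → ℝ) (v : Spinor n) (hx : (cliffR ε x).mulVec v = 0) :
    (cliffR ε x).mulVec ((cliffR ε y).mulVec v)
      = ((-2 * ipR ε x y : ℝ) : ℂ) • v := by
  have h := congrArg (fun M : Matrix (Fin (n / 2) → Fin 2) (Fin (n / 2) → Fin 2) ℂ =>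
    M.mulVec v) (cliffR_rel ε hε x y)
  simp only [Matrix.add_mulVec, Matrix.smul_mulVec, Matrix.one_mulVec] at h
  rw [← Matrix.mulVec_mulVec, ← Matrix.mulVec_mulVec, hx, Matrix.mulVec_zero,
    add_zero] at h
  exact h

/-- inner product with a `±` combination of `Pi.single 0` and `Pi.single lastI`. -/
lemma ipR_comb {n : ℕ} (ε : Fin n → ℝ) (i0 i1 : Fin n) (h01 : i0 ≠ i1)
    (s t : ℝ) (w : Fin n → ℝ) :
    ipR ε (s • (Pi.single i0 1 : Fin n → ℝ) + t • (Pi.single i1 1 : Fin n → ℝ)) w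
      = s * (ε i0 * w i0) + t * (ε i1 * w i1) := by
  rw [ipR]
  have key : ∀ i : Fin n, ε i * (s • (Pi.single i0 1 : Fin n → ℝ) + t • (Pi.single i1 1 : Fin n → ℝ)) i * w i
      = (if i = i0 then s * (ε i0 * w i0) else 0)
        + (if i = i1 then t * (ε i1 * w i1) else 0) := by
    intro i
    by_cases h0 : i = i0
    · subst h0
      rw [if_pos rfl, if_neg h01]
      simp [Pi.single_apply, Ne.symm h01]
      ring
    · by_cases h1 : i = i1
      · subst h1
        rw [if_neg h0, if_pos rfl]
        simp [Pi.single_apply, h0]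
        ring
      · rw [if_neg h0, if_neg h1]
        simp [Pi.single_apply, h0, h1]
  rw [Finset.sum_congr rfl fun i _ => key i, Finset.sum_add_distrib,
    Finset.sum_ite_eq' Finset.univ i0, Finset.sum_ite_eq' Finset.univ i1]
  simp

end

theorem kernel_of_annihilated_spinor
    (p q : ℕ) (ε : Fin (p + q + 2) → ℝ)
    (hε : ∀ i, ε i = 1 ∨ ε i = -1)
    (hp : (negSet ε).card = p + 1)
    (h0 : ε 0 = -1) (hlast : ε (Fin.last (p + q + 1)) = 1)
    (v : Spinor (p + q + 2)) (hv : v ≠ 0)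
    (hann : (cliffR ε (eMinus (p + q))).mulVec v = 0) :
    -- `{X ∈ ℝ^{p+1,q+1} : X·v = 0} = ℝ e₋ ⊕ {y ∈ span(e₁,…,e_n) : y·v = 0}` …
    (∀ X : Fin (p + q + 2) → ℝ,
      (cliffR ε X).mulVec v = 0 ↔
        ∃ (c : ℝ) (y : Fin (p + q + 2) → ℝ),
          y 0 = 0 ∧ y (Fin.last (p + q + 1)) = 0 ∧ (cliffR ε y).mulVec v = 0 ∧
          X = c • eMinus (p + q) + y) ∧
    -- … in particular its dimension exceeds by one that of the kernel in `ℝ^{p,q}`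
    Set.finrank ℝ {X : Fin (p + q + 2) → ℝ | (cliffR ε X).mulVec v = 0}
      = Set.finrank ℝ {y : Fin (p + q + 2) → ℝ |
          y 0 = 0 ∧ y (Fin.last (p + q + 1)) = 0 ∧ (cliffR ε y).mulVec v = 0} + 1 := by
  classical
  set lastI : Fin (p + q + 2) := Fin.last (p + q + 1) with hlastI
  have h0last : (0 : Fin (p + q + 2)) ≠ lastI := by
    intro h
    have := congrArg Fin.val h
    simp [hlastI, Fin.last] at this
  set s : ℝ := (Real.sqrt 2)⁻¹ with hsdef
  have hsqrt : Real.sqrt 2 ≠ 0 := by positivity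
  have hs : s ≠ 0 := inv_ne_zero hsqrt
  have hs2 : s * s = 1 / 2 := by
    rw [hsdef, ← mul_inv, Real.mul_self_sqrt (by norm_num : (0:ℝ) ≤ 2)]
    norm_num
  set em : Fin (p + q + 2) → ℝ := eMinus (p + q) with hemdef
  have em_eq : em = s • (Pi.single lastI 1 : Fin (p + q + 2) → ℝ)
      + (-s) • (Pi.single 0 1 : Fin (p + q + 2) → ℝ) := by
    rw [hemdef, eMinus, smul_sub, sub_eq_add_neg, neg_smul]
  set ep : Fin (p + q + 2) → ℝ := s • (Pi.single lastI 1 : Fin (p + q + 2) → ℝ)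
      + s • (Pi.single 0 1 : Fin (p + q + 2) → ℝ) with hepdef
  have hlast' : lastI ≠ 0 := Ne.symm h0last
  have ipem : ∀ w : Fin (p + q + 2) → ℝ, ipR ε em w = s * (w lastI + w 0) := by
    intro w
    rw [em_eq, ipR_comb ε lastI 0 hlast' s (-s) w, hlast, h0]
    ring
  have ep_last : ep lastI = s := by
    simp [hepdef, Pi.single_apply, hlast']
  have ep_0 : ep 0 = s := by
    simp [hepdef, Pi.single_apply, h0last]
  have hipep : ipR ε em ep = 1 := by
    rw [ipem, ep_last, ep_0]
    linear_combination 2 * hs2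
  have em_0 : em 0 = -s := by
    rw [em_eq]
    simp [Pi.single_apply, h0last]
  have em_ne : em ≠ 0 := by
    intro h
    have : em 0 = 0 := by rw [h]; rfl
    rw [em_0] at this
    exact hs (by linarith)
  -- decomposition of the `e₀,e_{n+1}` components
  have decomp : ∀ a b : ℝ, ((b - a) * s) • em + ((a + b) * s) • ep
      = Pi.single (0 : Fin (p + q + 2)) a + Pi.single lastI b := by
    intro a b
    have hb : (Pi.single lastI b : Fin (p + q + 2) → ℝ)
        = b • (Pi.single lastI 1 : Fin (p + q + 2) → ℝ) := by
      rw [← Pi.single_smul, smul_eq_mul, mul_one]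
    have ha : (Pi.single (0 : Fin (p + q + 2)) a : Fin (p + q + 2) → ℝ)
        = a • (Pi.single (0 : Fin (p + q + 2)) 1 : Fin (p + q + 2) → ℝ) := by
      rw [← Pi.single_smul, smul_eq_mul, mul_one]
    rw [em_eq, hepdef, ha, hb]
    match_scalars
    · linear_combination (2 * b) * hs2
    · linear_combination (2 * a) * hs2
  -- part 1
  have part1 : ∀ X : Fin (p + q + 2) → ℝ,
      (cliffR ε X).mulVec v = 0 ↔
        ∃ (c : ℝ) (y : Fin (p + q + 2) → ℝ),
          y 0 = 0 ∧ y lastI = 0 ∧ (cliffR ε y).mulVec v = 0 ∧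
          X = c • em + y := by
    intro X
    constructor
    · intro hX
      set a := X 0 with hadef
      set b := X lastI with hbdef
      set y : Fin (p + q + 2) → ℝ :=
        X - Pi.single (0 : Fin (p + q + 2)) a - Pi.single lastI b with hydef
      have hy0 : y 0 = 0 := by
        simp [hydef, Pi.single_apply, h0last]
        exact sub_self _
      have hyl : y lastI = 0 := by
        simp [hydef, Pi.single_apply, hlast']
        exact sub_self _
      have hXdec : X = y + (((b - a) * s) • em + ((a + b) * s) • ep) := by
        rw [decomp, hydef]
        abel
      -- clifford-multiply
      have hsum : (cliffR ε y).mulVec v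
          + (((a + b) * s) : ℝ) • (cliffR ε ep).mulVec v = 0 := by
        have := hX
        rw [hXdec, cliffR_add, cliffR_add, cliffR_smul, cliffR_smul,
          Matrix.add_mulVec, Matrix.add_mulVec, Matrix.smul_mulVec,
          Matrix.smul_mulVec, hann, smul_zero, zero_add, ← rsmul_eq] at this
        exact this
      -- hit with e₋·
      have hipemy : ipR ε em y = 0 := by rw [ipem, hy0, hyl]; ring
      have kill : (cliffR ε em).mulVec ((cliffR ε y).mulVec v
          + (((a + b) * s) : ℝ) • (cliffR ε ep).mulVec v) = 0 := by
        rw [hsum, Matrix.mulVec_zero]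
      rw [Matrix.mulVec_add, Matrix.mulVec_smul,
        cliff_double ε hε em y v hann, cliff_double ε hε em ep v hann,
        hipemy, hipep] at kill
      simp only [mul_zero, neg_zero, Complex.ofReal_zero, zero_smul, zero_add,
        mul_one] at kill
      rw [rsmul_eq, smul_smul] at kill
      have hcoef : ((a + b) * s : ℝ) = 0 := by
        rcases smul_eq_zero.mp kill with h | h
        · have h' : ((a + b) * s : ℂ) * (-2) = 0 := by exact_mod_cast h
          have h2 : ((a + b) * s : ℂ) = 0 := by
            rcases mul_eq_zero.mp h' with h'' | h''
            · exact h''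
            · norm_num at h''
          exact_mod_cast h2
        · exact absurd h hv
      refine ⟨(b - a) * s, y, hy0, hyl, ?_, ?_⟩
      · have := hsum
        rw [hcoef] at this
        simpa using this
      · rw [hXdec, hcoef]
        simp
        abel
    · rintro ⟨c, y, hy0, hyl, hLy, rfl⟩
      rw [cliffR_add, cliffR_smul, Matrix.add_mulVec, Matrix.smul_mulVec,
        hann, smul_zero, zero_add, hLy]
  refine ⟨part1, ?_⟩
  -- part 2 : dimensions
  set L := cliffMulVec ε v with hLdef
  have hLapp : ∀ x, L x = (cliffR ε x).mulVec v := fun _ => rfl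
  set W : Submodule ℝ (Fin (p + q + 2) → ℝ) :=
    (LinearMap.ker L ⊓ LinearMap.ker (LinearMap.proj (R := ℝ) (0 : Fin (p + q + 2))))
      ⊓ LinearMap.ker (LinearMap.proj (R := ℝ) lastI) with hWdef
  have hWmem : ∀ x, x ∈ W ↔ x 0 = 0 ∧ x lastI = 0 ∧ (cliffR ε x).mulVec v = 0 := by
    intro x
    simp only [hWdef, Submodule.mem_inf, LinearMap.mem_ker, LinearMap.proj_apply, hLapp]
    tauto
  have hsup : LinearMap.ker L = (ℝ ∙ em) ⊔ W := by
    apply le_antisymm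
    · intro X hX
      rw [LinearMap.mem_ker, hLapp] at hX
      obtain ⟨c, y, hy0, hyl, hLy, rfl⟩ := (part1 X).mp hX
      exact Submodule.add_mem _
        (Submodule.mem_sup_left (Submodule.smul_mem _ c (Submodule.mem_span_singleton_self em)))
        (Submodule.mem_sup_right ((hWmem y).mpr ⟨hy0, hyl, hLy⟩))
    · apply sup_le
      · rw [Submodule.span_singleton_le_iff_mem, LinearMap.mem_ker, hLapp]
        exact hann
      · intro x hx
        rw [LinearMap.mem_ker, hLapp]
        exact ((hWmem x).mp hx).2.2
  have hdisj : (ℝ ∙ em) ⊓ W = ⊥ := by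
    rw [eq_bot_iff]
    rintro x ⟨hx1, hx2⟩
    obtain ⟨c, rfl⟩ := Submodule.mem_span_singleton.mp hx1
    have hx0 : (c • em) 0 = 0 := ((hWmem _).mp hx2).1
    rw [Pi.smul_apply, em_0, smul_eq_mul] at hx0
    have hc : c = 0 := by
      rcases mul_eq_zero.mp hx0 with h | h
      · exact h
      · exact absurd (by linarith : s = 0) hs
    simp [hc]
  have hfin := Submodule.finrank_sup_add_finrank_inf_eq (ℝ ∙ em) W
  rw [hdisj, finrank_bot, add_zero, finrank_span_singleton em_ne] at hfin
  have hset1 : {X : Fin (p + q + 2) → ℝ | (cliffR ε X).mulVec v = 0}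
      = ↑(LinearMap.ker L) := by
    ext X
    simp [LinearMap.mem_ker, hLapp]
  have hset2 : {y : Fin (p + q + 2) → ℝ |
      y 0 = 0 ∧ y lastI = 0 ∧ (cliffR ε y).mulVec v = 0} = ↑W := by
    ext x
    simp only [Set.mem_setOf_eq, SetLike.mem_coe, hWmem]
  rw [hset1, hset2]
  simp only [Set.finrank]
  rw [Submodule.span_eq, Submodule.span_eq, hsup]
  omega

end Paper
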